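/- Let H be a real Hilbert space, T_θ : H → H be θ-negatively averaged and T_α : H → H be α-averaged with θ, α ∈ (0,1). Then the composition T_θ ∘ T_α is (κ/(κ+1))-negatively averaged, where κ = θ/(1−θ) + α/(1−α). -/

import Mathlib

open scoped RealInnerProductSpace

lemma avg_sq_ineq {H : Type*} [NormedAddCommGroup H] [InnerProductSpace ℝ H]
    (γ : ℝ) (hγ0 : 0 < γ) (hγ1 : γ < 1) (d m : H) (hm : ‖m‖ ≤ ‖d‖) :
    ‖(1-γ)•d + γ•m‖^2 + (1-γ)/γ * ‖γ•(d - m)‖^2 ≤ ‖d‖^2 := by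
  have hm2 : ‖m‖^2 ≤ ‖d‖^2 := by nlinarith [norm_nonneg m, norm_nonneg d]
  have h1γ : (0:ℝ) < 1 - γ := by linarith
  have h1 : ‖(1-γ)•d + γ•m‖^2
      = (1-γ)^2*‖d‖^2 + 2*((1-γ)*γ)*(⟪d, m⟫) + γ^2*‖m‖^2 := by
    rw [norm_add_sq_real, real_inner_smul_left, real_inner_smul_right,
      norm_smul, norm_smul, Real.norm_eq_abs, Real.norm_eq_abs,
      abs_of_pos hγ0, abs_of_pos h1γ]
    ring
  have h2 : ‖γ•(d-m)‖^2 = γ^2 * (‖d‖^2 - 2*(⟪d, m⟫) + ‖m‖^2) := by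
    rw [norm_smul, Real.norm_eq_abs, abs_of_pos hγ0, mul_pow, norm_sub_sq_real]
  have h3 : (1-γ)/γ * (γ^2 * (‖d‖^2 - 2*(⟪d, m⟫) + ‖m‖^2))
      = (1-γ)*γ*(‖d‖^2 - 2*(⟪d, m⟫) + ‖m‖^2) := by
    field_simp
  rw [h1, h2, h3]
  nlinarith [hm2]

lemma cs_scalar (p q A B : ℝ) (hp : 0 < p) (hq : 0 < q) (hA : 0 ≤ A) (hB : 0 ≤ B) :
    (A+B)^2 ≤ (1/p + 1/q) * (p*A^2 + q*B^2) := by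
  rw [div_add_div _ _ (ne_of_gt hp) (ne_of_gt hq)]
  rw [div_mul_eq_mul_div, le_div_iff₀ (by positivity)]
  nlinarith [sq_nonneg (p*A - q*B), mul_pos hp hq]

lemma final_scalar (κ G D c : ℝ) (hκ0 : 0 < κ) (hkey2 : (κ+1)*G - 2*c ≤ (κ-1)*D) :
    G - 2*(1-κ/(κ+1))*c + (1-κ/(κ+1))^2*D ≤ (κ/(κ+1))^2*D := by
  have hκ1 : (0:ℝ) < κ+1 := by linarith
  have h := mul_le_mul_of_nonneg_left hkey2 (mul_self_nonneg (κ+1) |> fun _ => hκ1.le)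
  have e1 : 1 - κ/(κ+1) = 1/(κ+1) := by field_simp; ring
  rw [e1]
  rw [div_pow, div_pow, one_pow]
  rw [show (2:ℝ)*(1/(κ+1))*c = 2*c/(κ+1) by ring]
  rw [div_mul_eq_mul_div, div_mul_eq_mul_div]
  rw [show G - 2*c/(κ+1) + 1*D/(κ+1)^2 = (G*(κ+1)^2 - 2*c*(κ+1) + D)/(κ+1)^2 by
    field_simp]
  rw [div_le_div_iff₀ (by positivity) (by positivity)]
  nlinarith [h]

lemma main_est {H : Type*} [NormedAddCommGroup H] [InnerProductSpace ℝ H]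
    (θ α κ β : ℝ) (hθ0 : 0 < θ) (hθ1 : θ < 1) (hα0 : 0 < α) (hα1 : α < 1)
    (hκ : κ = θ / (1 - θ) + α / (1 - α)) (hβ : β = κ / (κ + 1))
    (d u w : H) (hu : ‖u‖ ≤ ‖d‖) (hw : ‖w‖ ≤ ‖(1-α)•d + α•u‖) :
    ‖(1-θ)•((1-α)•d + α•u) + θ•(-w) - (1-β)•d‖ ≤ β*‖d‖ := by
  have h1θ : (0:ℝ) < 1 - θ := by linarith
  have h1α : (0:ℝ) < 1 - α := by linarith
  have hκ0 : 0 < κ := by rw [hκ]; exact add_pos (div_pos hθ0 h1θ) (div_pos hα0 h1α)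
  have hκ1 : (0:ℝ) < κ + 1 := by linarith
  have hβ0 : 0 < β := hβ ▸ div_pos hκ0 hκ1
  have hβ1 : β < 1 := by rw [hβ, div_lt_one hκ1]; linarith
  set t : H := (1-α)•d + α•u with ht
  have hw' : ‖-w‖ ≤ ‖t‖ := by rw [norm_neg]; exact hw
  have ineq1 := avg_sq_ineq α hα0 hα1 d u hu
  rw [← ht] at ineq1
  have ineq2 := avg_sq_ineq θ hθ0 hθ1 t (-w) hw'
  set g : H := (1-θ)•t + θ•(-w) with hg
  have hdg : ‖d - g‖ ≤ ‖α•(d - u)‖ + ‖θ•(t - -w)‖ := by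
    have e : d - g = α•(d - u) + θ•(t - -w) := by rw [hg, ht]; module
    rw [e]; exact norm_add_le _ _
  have hdg2 : ‖d - g‖^2 ≤ (‖α•(d - u)‖ + ‖θ•(t - -w)‖)^2 :=
    pow_le_pow_left₀ (norm_nonneg _) hdg 2
  have hcs := cs_scalar ((1-α)/α) ((1-θ)/θ) ‖α•(d - u)‖ ‖θ•(t - -w)‖
    (div_pos h1α hα0) (div_pos h1θ hθ0) (norm_nonneg _) (norm_nonneg _)
  have h5 : ((1-α)/α) * ‖α•(d - u)‖^2 + ((1-θ)/θ) * ‖θ•(t - -w)‖^2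
      ≤ ‖d‖^2 - ‖g‖^2 := by linarith [ineq1, ineq2]
  have hkey : ‖d - g‖^2 ≤ κ * (‖d‖^2 - ‖g‖^2) := by
    calc ‖d - g‖^2 ≤ (‖α•(d - u)‖ + ‖θ•(t - -w)‖)^2 := hdg2
      _ ≤ (1/((1-α)/α) + 1/((1-θ)/θ)) *
          (((1-α)/α) * ‖α•(d - u)‖^2 + ((1-θ)/θ) * ‖θ•(t - -w)‖^2) := hcs
      _ = κ * (((1-α)/α) * ‖α•(d - u)‖^2 + ((1-θ)/θ) * ‖θ•(t - -w)‖^2) := by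
          congr 1
          rw [one_div_div, one_div_div, hκ]; ring
      _ ≤ κ * (‖d‖^2 - ‖g‖^2) := mul_le_mul_of_nonneg_left h5 hκ0.le
  rw [norm_sub_sq_real d g] at hkey
  have hkey2 : (κ+1)*‖g‖^2 - 2*(⟪d, g⟫) ≤ (κ-1)*‖d‖^2 := by linarith [hkey]
  have hexp2 : ‖g - (1-β)•d‖^2
      = ‖g‖^2 - 2*(1-β)*(⟪d, g⟫) + (1-β)^2*‖d‖^2 := by
    rw [norm_sub_sq_real, real_inner_smul_right, norm_smul, Real.norm_eq_abs,
      abs_of_pos (by linarith : (0:ℝ) < 1 - β), real_inner_comm]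
    ring
  have hfs := final_scalar κ (‖g‖^2) (‖d‖^2) (⟪d, g⟫) hκ0 hkey2
  rw [← hβ] at hfs
  have hsq : ‖g - (1-β)•d‖^2 ≤ (β*‖d‖)^2 := by
    rw [hexp2, mul_pow]; linarith [hfs]
  exact le_of_pow_le_pow_left₀ two_ne_zero (by positivity) hsq

theorem comp_neg_averaged_averaged
    {H : Type*} [NormedAddCommGroup H] [InnerProductSpace ℝ H]
    (θ α : ℝ) (hθ0 : 0 < θ) (hθ1 : θ < 1) (hα0 : 0 < α) (hα1 : α < 1)
    (Tθ Tα : H → H)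
    (hTθ : ∃ N : H → H, (∀ x y : H, ‖N x - N y‖ ≤ ‖x - y‖) ∧
      ∀ x : H, Tθ x = (θ - 1) • x + θ • N x)
    (hTα : ∃ N : H → H, (∀ x y : H, ‖N x - N y‖ ≤ ‖x - y‖) ∧
      ∀ x : H, Tα x = (1 - α) • x + α • N x) :
    ∃ N : H → H, (∀ x y : H, ‖N x - N y‖ ≤ ‖x - y‖) ∧
      ∀ x : H, Tθ (Tα x) =
        ((θ / (1 - θ) + α / (1 - α)) / (θ / (1 - θ) + α / (1 - α) + 1) - 1) • x
        + ((θ / (1 - θ) + α / (1 - α)) / (θ / (1 - θ) + α / (1 - α) + 1)) • N x := by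
  obtain ⟨Nθ, hNθ, hθrep⟩ := hTθ
  obtain ⟨Nα, hNα, hαrep⟩ := hTα
  have h1θ : (0:ℝ) < 1 - θ := by linarith
  have h1α : (0:ℝ) < 1 - α := by linarith
  set κ : ℝ := θ / (1 - θ) + α / (1 - α) with hκdef
  have hκ0 : 0 < κ := add_pos (div_pos hθ0 h1θ) (div_pos hα0 h1α)
  have hκ1 : (0:ℝ) < κ + 1 := by linarith
  set β : ℝ := κ / (κ + 1) with hβdef
  have hβ0 : 0 < β := div_pos hκ0 hκ1
  refine ⟨fun x => β⁻¹ • (Tθ (Tα x) - (β - 1) • x), ?_, ?_⟩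
  · intro x y
    have hu : ‖Nα x - Nα y‖ ≤ ‖x - y‖ := hNα x y
    have hw : ‖Nθ (Tα x) - Nθ (Tα y)‖ ≤ ‖(1-α)•(x-y) + α•(Nα x - Nα y)‖ := by
      have e : Tα x - Tα y = (1-α)•(x-y) + α•(Nα x - Nα y) := by
        rw [hαrep x, hαrep y]; module
      rw [← e]; exact hNθ _ _
    have hest := main_est θ α κ β hθ0 hθ1 hα0 hα1 hκdef hβdef
      (x - y) (Nα x - Nα y) (Nθ (Tα x) - Nθ (Tα y)) hu hw
    have hV : (fun x => β⁻¹ • (Tθ (Tα x) - (β - 1) • x)) x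
        - (fun x => β⁻¹ • (Tθ (Tα x) - (β - 1) • x)) y
        = β⁻¹ • (-((1-θ)•((1-α)•(x-y) + α•(Nα x - Nα y))
            + θ•(-(Nθ (Tα x) - Nθ (Tα y))) - (1-β)•(x-y))) := by
      simp only
      rw [← smul_sub]
      congr 1
      have e1 : Tθ (Tα x) - (β - 1) • x - (Tθ (Tα y) - (β - 1) • y)
          = (Tθ (Tα x) - Tθ (Tα y)) - (β-1)•(x - y) := by module
      have e2 : Tθ (Tα x) - Tθ (Tα y)
          = (θ-1)•(Tα x - Tα y) + θ•(Nθ (Tα x) - Nθ (Tα y)) := by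
        rw [hθrep (Tα x), hθrep (Tα y)]; module
      have e3 : Tα x - Tα y = (1-α)•(x-y) + α•(Nα x - Nα y) := by
        rw [hαrep x, hαrep y]; module
      rw [e1, e2, e3]; module
    rw [hV, norm_smul, norm_neg, Real.norm_eq_abs, abs_of_pos (inv_pos.mpr hβ0)]
    calc β⁻¹ * ‖(1-θ)•((1-α)•(x-y) + α•(Nα x - Nα y))
          + θ•(-(Nθ (Tα x) - Nθ (Tα y))) - (1-β)•(x-y)‖
        ≤ β⁻¹ * (β * ‖x - y‖) :=
          mul_le_mul_of_nonneg_left hest (le_of_lt (inv_pos.mpr hβ0))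
      _ = ‖x - y‖ := by field_simp
  · intro x
    show Tθ (Tα x) = (β - 1) • x + β • (β⁻¹ • (Tθ (Tα x) - (β - 1) • x))
    rw [smul_smul, mul_inv_cancel₀ (ne_of_gt hβ0), one_smul]
    module
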